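/- arXiv:1308.6369 — 2 statements merged into one kernel-verified Lean document; each statement's English description precedes it below -/
import Mathlib

section
/- Let S₀ > 0, R > 0, b, c ∈ ℝ, and suppose there exists q > 2 with c - 3b/q > 0. Let V : ℝ³ × [0,S₀] → ℝ³ be of class C¹ with div V(·,s) = 0 for all s, and let f : ℝ³ × [0,S₀] → ℝ be of class C¹ with f ≥ 0, f(y,s) = 0 whenever |y| ≥ R, f(y,0) = f(y,S₀) for all y ∈ ℝ³, and satisfying the differential inequality ∂_s f + c f + b (y·∇)f + (V·∇)f ≤ 0 on B_R × (0,S₀). Then f = 0 on B_R × (0,S₀). -/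
noncomputable section

open Real Metric Set MeasureTheory

/-- ℝ³ as a Euclidean space. -/
abbrev E3 := EuclideanSpace ℝ (Fin 3)

/-- Divergence of a vector field on ℝ³. -/
def div3 (f : E3 → E3) (y : E3) : ℝ :=
  ∑ i, fderiv ℝ f y (EuclideanSpace.single i 1) i

/-- The partial derivative ∂_j f_i of a vector field on ℝ³. -/
def pd3 (f : E3 → E3) (y : E3) (j i : Fin 3) : ℝ :=
  fderiv ℝ f y (EuclideanSpace.single j 1) i

/-- Curl of a vector field on ℝ³. -/
def curl3 (f : E3 → E3) (y : E3) : E3 :=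
  (WithLp.equiv 2 (Fin 3 → ℝ)).symm
    ![pd3 f y 1 2 - pd3 f y 2 1, pd3 f y 2 0 - pd3 f y 0 2, pd3 f y 0 1 - pd3 f y 1 0]

lemma e3_decomp (v : E3) : ∑ i, v i • EuclideanSpace.single i (1:ℝ) = v := by
  ext j
  have : (∑ i, v i • EuclideanSpace.single i (1:ℝ)) j
      = ∑ i, (v i • EuclideanSpace.single i (1:ℝ)) j := by
    rw [WithLp.ofLp_sum, Finset.sum_apply]
  rw [this]
  simp [EuclideanSpace.single_apply]

lemma integrable_of_supp {u : E3 → ℝ} (hu : Continuous u) {R : ℝ}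
    (h : ∀ y : E3, R ≤ ‖y‖ → u y = 0) : Integrable u := by
  apply hu.integrable_of_hasCompactSupport
  apply HasCompactSupport.intro (isCompact_closedBall (0:E3) R)
  intro y hy
  refine h y (le_of_not_ge (fun hc => hy ?_))
  simpa [mem_closedBall, dist_zero_right] using hc

set_option maxHeartbeats 2000000 in
/-- The periodic Gronwall-type lemma: a nonnegative C¹ function, compactly
supported in B_R, periodic in time, and satisfying the differential inequality
∂ₛf + c f + b (y·∇)f + (V·∇)f ≤ 0 with c - 3b/q > 0 for some q > 2, vanishes. -/
theorem periodic_differential_inequality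
    (S₀ R b c : ℝ) (hS₀ : 0 < S₀) (hR : 0 < R)
    (hq : ∃ q : ℝ, 2 < q ∧ 0 < c - 3*b/q)
    (V : E3 → ℝ → E3) (f : E3 → ℝ → ℝ)
    (hV : ContDiffOn ℝ 1 (fun p : E3 × ℝ => V p.1 p.2) (Set.univ ×ˢ Set.Icc 0 S₀))
    (hdiv : ∀ (y : E3), ∀ s ∈ Set.Icc (0:ℝ) S₀, div3 (fun z => V z s) y = 0)
    (hf : ContDiffOn ℝ 1 (fun p : E3 × ℝ => f p.1 p.2) (Set.univ ×ˢ Set.Icc 0 S₀))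
    (hfpos : ∀ (y : E3), ∀ s ∈ Set.Icc (0:ℝ) S₀, 0 ≤ f y s)
    (hfsupp : ∀ (y : E3), ∀ s ∈ Set.Icc (0:ℝ) S₀, R ≤ ‖y‖ → f y s = 0)
    (hfper : ∀ y : E3, f y 0 = f y S₀)
    (hineq : ∀ y ∈ Metric.ball (0:E3) R, ∀ s ∈ Set.Ioo (0:ℝ) S₀,
      deriv (fun t => f y t) s + c * f y s
        + b * fderiv ℝ (fun z => f z s) y y
        + fderiv ℝ (fun z => f z s) y (V y s) ≤ 0) :
    ∀ y ∈ Metric.ball (0:E3) R, ∀ s ∈ Set.Ioo (0:ℝ) S₀, f y s = 0 := by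
  obtain ⟨q, hq2, hqc⟩ := hq
  have hq0 : (0:ℝ) < q := by linarith
  have hq1 : (1:ℝ) ≤ q := by linarith
  have hqne : q ≠ 0 := ne_of_gt hq0
  have hq1ne : q - 1 ≠ 0 := by intro h; nlinarith [h]
  have hlam : 0 < q * c - 3 * b := by
    have h1 : 0 < q * (c - 3*b/q) := mul_pos hq0 hqc
    have : q * (c - 3*b/q) = q*c - 3*b := by field_simp
    linarith [this ▸ h1]
  set lam : ℝ := q * c - 3 * b with hlamdef
  set F : E3 × ℝ → ℝ := fun p => f p.1 p.2 with hFdef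
  have hopen : IsOpen ((univ : Set E3) ×ˢ Ioo (0:ℝ) S₀) := isOpen_univ.prod isOpen_Ioo
  have hsub : (univ : Set E3) ×ˢ Ioo (0:ℝ) S₀ ⊆ univ ×ˢ Icc 0 S₀ :=
    Set.prod_mono_right Ioo_subset_Icc_self
  -- slice regularity
  have Cf : ∀ s ∈ Icc (0:ℝ) S₀, ContDiff ℝ 1 (fun y => f y s) := by
    intro s hs
    rw [← contDiffOn_univ]
    exact hf.comp ((contDiff_id.prodMk contDiff_const).contDiffOn)
      (fun y _ => ⟨trivial, hs⟩)
  have CV : ∀ s ∈ Icc (0:ℝ) S₀, ContDiff ℝ 1 (fun y => V y s) := by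
    intro s hs
    rw [← contDiffOn_univ]
    exact hV.comp ((contDiff_id.prodMk contDiff_const).contDiffOn)
      (fun y _ => ⟨trivial, hs⟩)
  -- joint differentiability at interior times
  have hdF : ∀ (y : E3), ∀ s ∈ Ioo (0:ℝ) S₀, DifferentiableAt ℝ F (y, s) := by
    intro y s hs
    have hmem : (univ : Set E3) ×ˢ Icc (0:ℝ) S₀ ∈ nhds ((y, s) : E3 × ℝ) :=
      Filter.mem_of_superset (hopen.mem_nhds ⟨trivial, hs⟩) hsub
    exact (hf.contDiffAt hmem).differentiableAt one_ne_zero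
  -- time derivative of f
  have hdt : ∀ (y : E3), ∀ s ∈ Ioo (0:ℝ) S₀,
      HasDerivAt (fun t => f y t) (fderiv ℝ F (y, s) (0, 1)) s := by
    intro y s hs
    have h1 := (hdF y s hs).hasFDerivAt
    have h2 : HasDerivAt (fun t : ℝ => ((y, t) : E3 × ℝ)) ((0 : E3), (1:ℝ)) s :=
      (hasDerivAt_const s y).prodMk (hasDerivAt_id s)
    exact h1.comp_hasDerivAt s h2
  -- spatial derivative of f
  have hdy : ∀ (y : E3), ∀ s ∈ Ioo (0:ℝ) S₀,
      HasFDerivAt (fun z => f z s)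
        ((fderiv ℝ F (y, s)).comp (ContinuousLinearMap.inl ℝ E3 ℝ)) y := by
    intro y s hs
    exact HasFDerivAt.comp y (f := fun e : E3 => (e, s)) (hdF y s hs).hasFDerivAt (hasFDerivAt_prodMk_left y s)
  set h : E3 → ℝ → ℝ := fun y s => (f y s) ^ q with hhdef
  set h' : E3 → ℝ → ℝ := fun y s => q * (f y s) ^ (q - 1) * fderiv ℝ F (y, s) (0, 1)
    with hh'def
  -- time derivative of h
  have hdth : ∀ (y : E3), ∀ s ∈ Ioo (0:ℝ) S₀,
      HasDerivAt (fun t => h y t) (h' y s) s := by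
    intro y s hs
    have := (Real.hasDerivAt_rpow_const (x := f y s) (p := q) (Or.inr hq1)).comp
      s (hdt y s hs)
    exact this
  -- spatial derivative of h
  have hDh : ∀ (y : E3), ∀ s ∈ Icc (0:ℝ) S₀,
      fderiv ℝ (fun z => h z s) y
        = (q * (f y s) ^ (q - 1)) • (fderiv ℝ (fun z => f z s) y) := by
    intro y s hs
    have hdf : HasFDerivAt (fun z => f z s) (fderiv ℝ (fun z => f z s) y) y :=
      ((Cf s hs).differentiable one_ne_zero y).hasFDerivAt
    exact (hdf.rpow_const (Or.inr hq1)).fderiv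
  -- vanishing outside the ball
  have hzero : ∀ s ∈ Icc (0:ℝ) S₀, ∀ y : E3, R ≤ ‖y‖ → h y s = 0 := by
    intro s hs y hy
    simp only [hhdef, hfsupp y s hs hy]
    exact Real.zero_rpow hqne
  have hzero' : ∀ s ∈ Ioo (0:ℝ) S₀, ∀ y : E3, R ≤ ‖y‖ → h' y s = 0 := by
    intro s hs y hy
    simp only [hh'def, hfsupp y s (Ioo_subset_Icc_self hs) hy, Real.zero_rpow hq1ne,
      mul_zero, zero_mul]
  have hDhzero : ∀ s ∈ Icc (0:ℝ) S₀, ∀ y : E3, R ≤ ‖y‖ →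
      fderiv ℝ (fun z => h z s) y = 0 := by
    intro s hs y hy
    rw [hDh y s hs, hfsupp y s hs hy, Real.zero_rpow hq1ne, mul_zero, zero_smul]
  -- regularity of h in space
  have Ch : ∀ s ∈ Icc (0:ℝ) S₀, ContDiff ℝ 1 (fun y => h y s) := by
    intro s hs
    have : ContDiff ℝ 1 (fun x : ℝ => x ^ q) := by
      have := Real.contDiff_rpow_const_of_le (p := q) (n := 1) (by exact_mod_cast hq1)
      exact this
    exact this.comp (Cf s hs)
  -- joint continuity facts
  have cF : ContinuousOn F (univ ×ˢ Icc 0 S₀) := hf.continuousOn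
  have ch : ContinuousOn (fun p : E3 × ℝ => h p.1 p.2) (univ ×ˢ Icc 0 S₀) := by
    have : Continuous (fun x : ℝ => x ^ q) :=
      (Real.contDiff_rpow_const_of_le (p := q) (n := 0) (by exact_mod_cast hq0.le)).continuous
    exact this.comp_continuousOn cF
  have cDF : ContinuousOn (fderiv ℝ F) (univ ×ˢ Ioo 0 S₀) :=
    (hf.mono hsub).continuousOn_fderiv_of_isOpen hopen le_rfl
  have ch' : ContinuousOn (fun p : E3 × ℝ => h' p.1 p.2) (univ ×ˢ Ioo 0 S₀) := by
    have c1 : Continuous (fun x : ℝ => x ^ (q - 1)) :=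
      (Real.contDiff_rpow_const_of_le (p := q - 1) (n := 0)
        (by exact_mod_cast (by linarith : (0:ℝ) ≤ q - 1))).continuous
    have c2 : ContinuousOn (fun p : E3 × ℝ => (f p.1 p.2) ^ (q - 1))
        (univ ×ˢ Ioo 0 S₀) := c1.comp_continuousOn (cF.mono hsub)
    have c3 : ContinuousOn (fun p : E3 × ℝ => fderiv ℝ F p (0, 1))
        (univ ×ˢ Ioo 0 S₀) := cDF.clm_apply continuousOn_const
    exact ((continuousOn_const.mul c2).mul c3)
  set g : ℝ → ℝ := fun s => ∫ y : E3, h y s with hgdef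
  have hInth : ∀ s ∈ Icc (0:ℝ) S₀, Integrable (fun y => h y s) :=
    fun s hs => integrable_of_supp (Ch s hs).continuous (hzero s hs)
  -- Step A: continuity of g on [0, S₀]
  have stepA : ContinuousOn g (Icc 0 S₀) := by
    obtain ⟨M, hM⟩ := ((isCompact_closedBall (0:E3) R).prod isCompact_Icc).exists_bound_of_continuousOn
      (ch.mono (Set.prod_mono_left (subset_univ _)))
    apply continuousOn_of_dominated
      (bound := (closedBall (0:E3) R).indicator (fun _ => M))
    · intro s hs
      exact ((Ch s hs).continuous).aestronglyMeasurable
    · intro s hs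
      filter_upwards with y
      by_cases hyR : y ∈ closedBall (0:E3) R
      · rw [Set.indicator_of_mem hyR]
        exact hM (y, s) ⟨hyR, hs⟩
      · rw [Set.indicator_of_notMem hyR]
        have hyR' : R ≤ ‖y‖ := by
          simp only [mem_closedBall, dist_zero_right, not_le] at hyR
          exact hyR.le
        rw [hzero s hs y hyR']
        simp
    · rw [integrable_indicator_iff measurableSet_closedBall]
      exact integrableOn_const measure_closedBall_lt_top.ne
    · filter_upwards with y
      have c1 : ContinuousOn (fun t : ℝ => f y t) (Icc 0 S₀) := by
        have : ContinuousOn (fun t : ℝ => F (y, t)) (Icc 0 S₀) :=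
          cF.comp (continuous_const.prodMk continuous_id).continuousOn
            (fun t ht => ⟨trivial, ht⟩)
        exact this
      have c2 : Continuous (fun x : ℝ => x ^ q) :=
        (Real.contDiff_rpow_const_of_le (p := q) (n := 0) (by exact_mod_cast hq0.le)).continuous
      exact c2.comp_continuousOn c1
  -- Step B: derivative of g
  have stepB : ∀ s ∈ Ioo (0:ℝ) S₀,
      Integrable (fun y => h' y s) ∧ HasDerivAt g (∫ y : E3, h' y s) s := by
    intro s hs
    obtain ⟨hs0, hsS⟩ := hs
    set ε : ℝ := min s (S₀ - s) / 2 with hεdef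
    have hε : 0 < ε := by
      have : 0 < min s (S₀ - s) := lt_min hs0 (by linarith)
      positivity
    have hIccsub : Icc (s - ε) (s + ε) ⊆ Ioo (0:ℝ) S₀ := by
      intro t ht
      have h1 : min s (S₀ - s) ≤ s := min_le_left _ _
      have h2 : min s (S₀ - s) ≤ S₀ - s := min_le_right _ _
      constructor
      · have := ht.1; simp only [hεdef] at this ⊢; linarith
      · have := ht.2; simp only [hεdef] at this ⊢; linarith
    have hballsub : ball s ε ⊆ Icc (s - ε) (s + ε) := by
      intro t ht
      rw [mem_ball, Real.dist_eq, abs_lt] at ht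
      exact ⟨by linarith [ht.1], by linarith [ht.2]⟩
    obtain ⟨M, hM⟩ := (((isCompact_closedBall (0:E3) R).prod (isCompact_Icc
        (a := s - ε) (b := s + ε)))).exists_bound_of_continuousOn
      (ch'.mono (Set.prod_mono (subset_univ _) hIccsub))
    have key := hasDerivAt_integral_of_dominated_loc_of_deriv_le
      (μ := volume) (F := fun t y => h y t) (F' := fun t y => h' y t) (x₀ := s)
      (bound := (closedBall (0:E3) R).indicator (fun _ => M)) (ball_mem_nhds s hε)
      ?_ ?_ ?_ ?_ ?_ ?_
    · exact key
    · filter_upwards [isOpen_Ioo.mem_nhds ⟨hs0, hsS⟩] with t ht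
      exact ((Ch t (Ioo_subset_Icc_self ht)).continuous).aestronglyMeasurable
    · exact hInth s (Ioo_subset_Icc_self ⟨hs0, hsS⟩)
    · have : Continuous (fun y => h' y s) := by
        apply ch'.comp_continuous (continuous_id.prodMk continuous_const)
        intro y; exact ⟨trivial, hs0, hsS⟩
      exact this.aestronglyMeasurable
    · filter_upwards with y
      intro t ht
      by_cases hyR : y ∈ closedBall (0:E3) R
      · rw [Set.indicator_of_mem hyR]
        exact hM (y, t) ⟨hyR, hballsub ht⟩
      · rw [Set.indicator_of_notMem hyR]
        have hyR' : R ≤ ‖y‖ := by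
          simp only [mem_closedBall, dist_zero_right, not_le] at hyR
          exact hyR.le
        rw [hzero' t (hIccsub (hballsub ht)) y hyR']
        simp
    · rw [integrable_indicator_iff measurableSet_closedBall]
      exact integrableOn_const measure_closedBall_lt_top.ne
    · filter_upwards with y
      intro t ht
      exact hdth y t (hIccsub (hballsub ht))
  -- Step C: the differential inequality for g
  have stepC : ∀ s ∈ Ioo (0:ℝ) S₀, (∫ y : E3, h' y s) ≤ -lam * g s := by
    intro s hs
    have hs1 : s ∈ Icc (0:ℝ) S₀ := Ioo_subset_Icc_self hs
    set Dh : E3 → (E3 →L[ℝ] ℝ) := fun y => fderiv ℝ (fun z => h z s) y with hDhdef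
    have contDh : Continuous Dh := (Ch s hs1).continuous_fderiv one_ne_zero
    have contf : Continuous (fun y => f y s) := (Cf s hs1).continuous
    have contV : Continuous (fun y => V y s) := (CV s hs1).continuous
    have conth : Continuous (fun y => h y s) := (Ch s hs1).continuous
    have contDV : Continuous (fun y => fderiv ℝ (fun z => V z s) y) :=
      (CV s hs1).continuous_fderiv one_ne_zero
    have hDh0 : ∀ y : E3, R ≤ ‖y‖ → Dh y = 0 := fun y hy => hDhzero s hs1 y hy
    -- integrability of the relevant products
    have intDh : ∀ (w : E3 → ℝ), Continuous w → ∀ (v : E3),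
        Integrable (fun y => Dh y v * w y) := by
      intro w hw v
      apply integrable_of_supp ((contDh.clm_apply continuous_const).mul hw)
      intro y hy; simp only [Pi.mul_apply]; rw [hDh0 y hy]; simp
    have inth : ∀ (w : E3 → ℝ), Continuous w → Integrable (fun y => h y s * w y) := by
      intro w hw
      apply integrable_of_supp (conth.mul hw)
      intro y hy; simp only [Pi.mul_apply]; rw [hzero s hs1 y hy]; simp
    have intDhv : ∀ (w : E3 → E3), Continuous w → Integrable (fun y => Dh y (w y)) := by
      intro w hw
      apply integrable_of_supp (contDh.clm_apply hw)
      intro y hy; rw [hDh0 y hy]; simp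
    have hdiffh : Differentiable ℝ (fun y => h y s) := (Ch s hs1).differentiable one_ne_zero
    have hprojcont : ∀ i : Fin 3, Continuous (fun y : E3 => y i) :=
      fun i => (EuclideanSpace.proj (𝕜 := ℝ) i).continuous
    have hVicont : ∀ i : Fin 3, Continuous (fun y : E3 => V y s i) :=
      fun i => ((EuclideanSpace.proj (𝕜 := ℝ) i).continuous).comp contV
    -- first integration by parts: ∫ ∂ᵢh ⬝ yᵢ = -∫ h
    have IBP1 : ∀ i : Fin 3,
        (∫ y : E3, Dh y (EuclideanSpace.single i 1) * (y i)) = - ∫ y : E3, h y s := by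
      intro i
      have hcoe : (fun z : E3 => z i) = ⇑(EuclideanSpace.proj (𝕜 := ℝ) i) := rfl
      have hgfd : ∀ y : E3, fderiv ℝ (fun z : E3 => z i) y
          = EuclideanSpace.proj (𝕜 := ℝ) i := by
        intro y; rw [hcoe]; exact ContinuousLinearMap.fderiv _
      have hgapply : ∀ y : E3,
          fderiv ℝ (fun z : E3 => z i) y (EuclideanSpace.single i 1) = 1 := by
        intro y; rw [hgfd y]
        simp [PiLp.proj_apply, EuclideanSpace.single_apply]
      have hgd : Differentiable ℝ (fun y : E3 => y i) := by
        rw [hcoe]; exact (EuclideanSpace.proj (𝕜 := ℝ) i).differentiable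
      have key := integral_mul_fderiv_eq_neg_fderiv_mul_of_integrable
        (μ := volume) (f := fun y => h y s) (g := fun y : E3 => y i)
        (v := EuclideanSpace.single i 1)
        (intDh (fun y => y i) (hprojcont i) _)
        (by simp only [hgapply, mul_one]; exact hInth s hs1)
        (inth _ (hprojcont i)) (fun x _ => hdiffh x) (fun x _ => hgd x)
      simp only [hgapply, mul_one] at key
      linarith [key]
    -- second integration by parts: ∫ ∂ᵢh ⬝ Vᵢ = -∫ h ⬝ ∂ᵢVᵢ
    have IBP2 : ∀ i : Fin 3,
        (∫ y : E3, Dh y (EuclideanSpace.single i 1) * (V y s i))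
          = - ∫ y : E3, h y s
              * (fderiv ℝ (fun z => V z s) y (EuclideanSpace.single i 1) i) := by
      intro i
      have hVd : ∀ y : E3, HasFDerivAt (fun z : E3 => V z s i)
          ((EuclideanSpace.proj (𝕜 := ℝ) i).comp (fderiv ℝ (fun z => V z s) y)) y := by
        intro y
        exact (EuclideanSpace.proj (𝕜 := ℝ) i).hasFDerivAt.comp y
          (((CV s hs1).differentiable one_ne_zero y).hasFDerivAt)
      have hVfd : ∀ y : E3, fderiv ℝ (fun z : E3 => V z s i) y
          = (EuclideanSpace.proj (𝕜 := ℝ) i).comp (fderiv ℝ (fun z => V z s) y) :=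
        fun y => (hVd y).fderiv
      have hVapply : ∀ y : E3,
          fderiv ℝ (fun z : E3 => V z s i) y (EuclideanSpace.single i 1)
            = fderiv ℝ (fun z => V z s) y (EuclideanSpace.single i 1) i := by
        intro y; rw [hVfd y]; rfl
      have hVdiffi : Differentiable ℝ (fun y : E3 => V y s i) :=
        fun y => (hVd y).differentiableAt
      have hDVicont : Continuous
          (fun y : E3 => fderiv ℝ (fun z => V z s) y (EuclideanSpace.single i 1) i) :=
        ((EuclideanSpace.proj (𝕜 := ℝ) i).continuous).comp
          (contDV.clm_apply continuous_const)
      have key := integral_mul_fderiv_eq_neg_fderiv_mul_of_integrable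
        (μ := volume) (f := fun y => h y s) (g := fun y : E3 => V y s i)
        (v := EuclideanSpace.single i 1)
        (intDh (fun y => V y s i) (hVicont i) _)
        (by simp only [hVapply]; exact inth _ hDVicont)
        (inth _ (hVicont i)) (fun x _ => hdiffh x) (fun x _ => hVdiffi x)
      simp only [hVapply] at key
      linarith [key]
    -- decomposition of directional derivatives
    have pt1 : ∀ y : E3, Dh y y = ∑ i, Dh y (EuclideanSpace.single i 1) * y i := by
      intro y
      have h1 : Dh y y = Dh y (∑ i, y i • EuclideanSpace.single i 1) :=
        (congrArg _ (e3_decomp y)).symm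
      rw [h1, map_sum (Dh y) (fun i => y i • EuclideanSpace.single i (1:ℝ)) Finset.univ]
      refine Finset.sum_congr rfl fun i _ => ?_
      rw [_root_.map_smul, smul_eq_mul, mul_comm]
    have pt2 : ∀ y : E3, Dh y (V y s)
        = ∑ i, Dh y (EuclideanSpace.single i 1) * V y s i := by
      intro y
      have h1 : Dh y (V y s) = Dh y (∑ i, V y s i • EuclideanSpace.single i 1) :=
        (congrArg _ (e3_decomp (V y s))).symm
      rw [h1, map_sum (Dh y) (fun i => V y s i • EuclideanSpace.single i (1:ℝ)) Finset.univ]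
      refine Finset.sum_congr rfl fun i _ => ?_
      rw [_root_.map_smul, smul_eq_mul, mul_comm]
    -- the two integral identities
    have I1 : (∫ y : E3, Dh y y) = -3 * ∫ y : E3, h y s := by
      have e1 : (∫ y : E3, Dh y y)
          = ∑ i, ∫ y : E3, Dh y (EuclideanSpace.single i 1) * y i := by
        simp only [pt1]
        exact integral_finset_sum Finset.univ
          (fun i _ => intDh (fun y => y i) (hprojcont i) _)
      rw [e1]
      simp only [IBP1]
      rw [Finset.sum_const, Finset.card_univ, Fintype.card_fin]
      ring
    have I2 : (∫ y : E3, Dh y (V y s)) = 0 := by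
      have e1 : (∫ y : E3, Dh y (V y s))
          = ∑ i, ∫ y : E3, Dh y (EuclideanSpace.single i 1) * V y s i := by
        simp only [pt2]
        exact integral_finset_sum Finset.univ
          (fun i _ => intDh (fun y => V y s i) (hVicont i) _)
      rw [e1]
      have e4 : (∑ i, ∫ y : E3, Dh y (EuclideanSpace.single i 1) * V y s i)
          = ∑ i, -∫ y : E3, h y s
              * (fderiv ℝ (fun z => V z s) y (EuclideanSpace.single i 1) i) :=
        Finset.sum_congr rfl fun i _ => IBP2 i
      rw [e4]
      rw [show (∑ i, -∫ y : E3, h y s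
              * (fderiv ℝ (fun z => V z s) y (EuclideanSpace.single i 1) i))
          = -∑ i, ∫ y : E3, h y s
              * (fderiv ℝ (fun z => V z s) y (EuclideanSpace.single i 1) i) by simp]
      have intDVi : ∀ i : Fin 3, Integrable
          (fun y => h y s * fderiv ℝ (fun z => V z s) y (EuclideanSpace.single i 1) i) := by
        intro i
        refine inth (fun y => fderiv ℝ (fun z => V z s) y (EuclideanSpace.single i 1) i) ?_
        exact ((EuclideanSpace.proj (𝕜 := ℝ) i).continuous).comp
          (contDV.clm_apply continuous_const)
      rw [← integral_finset_sum Finset.univ (fun i _ => intDVi i)]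
      have hpw : ∀ y : E3, (∑ i, h y s
          * (fderiv ℝ (fun z => V z s) y (EuclideanSpace.single i 1) i)) = 0 := by
        intro y
        rw [← Finset.mul_sum]
        have hdiv3 : (∑ i, fderiv ℝ (fun z => V z s) y (EuclideanSpace.single i 1) i)
            = div3 (fun z => V z s) y := rfl
        rw [hdiv3, hdiv y s hs1, mul_zero]
      simp only [hpw]
      simp
    -- pointwise inequality for h'
    have Hpt : ∀ y : E3, h' y s ≤ -(q*c) * h y s - b * Dh y y - Dh y (V y s) := by
      intro y
      by_cases hyR : R ≤ ‖y‖
      · rw [hzero' s hs y hyR, hzero s hs1 y hyR, hDh0 y hyR]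
        simp
      · push_neg at hyR
        have hyb : y ∈ ball (0:E3) R := mem_ball_zero_iff.mpr hyR
        have hX := hineq y hyb s hs
        have hdteq : deriv (fun t => f y t) s = fderiv ℝ F (y, s) (0, 1) :=
          (hdt y s hs).deriv
        have e1 : h' y s = q * f y s ^ (q - 1) * deriv (fun t => f y t) s := by
          rw [hdteq]
        have e2 : Dh y y = q * f y s ^ (q - 1) * (fderiv ℝ (fun z => f z s) y y) := by
          rw [hDhdef]; simp only [hDh y s hs1]
          simp [smul_eq_mul]
        have e3 : Dh y (V y s)
            = q * f y s ^ (q - 1) * (fderiv ℝ (fun z => f z s) y (V y s)) := by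
          rw [hDhdef]; simp only [hDh y s hs1]
          simp [smul_eq_mul]
        have e4 : h y s = f y s ^ (q - 1) * f y s := by
          rcases eq_or_ne (f y s) 0 with h0 | h0
          · show f y s ^ q = f y s ^ (q-1) * f y s
            rw [h0]; simp [Real.zero_rpow hqne]
          · show f y s ^ q = f y s ^ (q-1) * f y s
            have hq' : q = (q - 1) + 1 := by ring
            rw [hq', Real.rpow_add_one h0]; ring_nf
        have hw0 : 0 ≤ q * f y s ^ (q - 1) :=
          mul_nonneg hq0.le (Real.rpow_nonneg (hfpos y s hs1) _)
        rw [e1, e2, e3, e4]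
        nlinarith [mul_nonneg hw0 (neg_nonneg.mpr hX)]
    -- putting everything together
    have iRHS : Integrable (fun y => -(q*c) * h y s - b * Dh y y - Dh y (V y s)) := by
      have i1 : Integrable (fun y => -(q*c) * h y s) := ((hInth s hs1).const_mul _)
      have i2 : Integrable (fun y => b * Dh y y) :=
        ((intDhv (fun y => y) continuous_id).const_mul b)
      have i3 : Integrable (fun y => Dh y (V y s)) := intDhv _ contV
      exact (i1.sub i2).sub i3
    have hgA : g s = ∫ y : E3, h y s := rfl
    calc (∫ y : E3, h' y s)
        ≤ ∫ y : E3, (-(q*c) * h y s - b * Dh y y - Dh y (V y s)) :=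
          integral_mono (stepB s hs).1 iRHS Hpt
      _ = -(q*c) * (∫ y : E3, h y s) - b * (∫ y : E3, Dh y y)
          - ∫ y : E3, Dh y (V y s) := by
          have j1 : Integrable (fun y : E3 => -(q*c) * h y s) :=
            (hInth s hs1).const_mul _
          have j2 : Integrable (fun y : E3 => b * Dh y y) := by
            have := (intDhv (fun y => y) continuous_id).const_mul b
            simpa using this
          have j3 : Integrable (fun y : E3 => Dh y (V y s)) := intDhv _ contV
          have j12 : Integrable (fun y : E3 => -(q*c) * h y s - b * Dh y y) := by
            have := j1.sub j2; exact this
          rw [integral_sub j12 j3, integral_sub j1 j2,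
            integral_const_mul, integral_const_mul]
      _ = -lam * g s := by
          rw [I1, I2, hgA, hlamdef]; ring
  -- Step D: nonnegativity and periodicity of g
  have hgnonneg : ∀ s ∈ Icc (0:ℝ) S₀, 0 ≤ g s := by
    intro s hs
    exact integral_nonneg (fun y => Real.rpow_nonneg (hfpos y s hs) q)
  have hgper : g 0 = g S₀ := by
    simp only [hgdef, hhdef]
    congr 1
    ext y
    rw [hfper y]
  -- Step E: g vanishes
  set ψ : ℝ → ℝ := fun s => Real.exp (lam * s) * g s with hψdef
  have hψd : ∀ s ∈ Ioo (0:ℝ) S₀,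
      HasDerivAt ψ (Real.exp (lam * s) * lam * g s
        + Real.exp (lam * s) * (∫ y : E3, h' y s)) s := by
    intro s hs
    have hexp : HasDerivAt (fun t : ℝ => Real.exp (lam * t)) (Real.exp (lam * s) * lam) s := by
      have := ((hasDerivAt_id s).const_mul lam).exp
      simp only [id, mul_one] at this
      exact this
    exact hexp.mul (stepB s hs).2
  have hψanti : AntitoneOn ψ (Icc 0 S₀) := by
    apply antitoneOn_of_deriv_nonpos (convex_Icc 0 S₀)
    · exact ((Real.continuous_exp.comp (continuous_const.mul continuous_id)).continuousOn).mul stepA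
    · intro s hs
      rw [interior_Icc] at hs
      exact (hψd s hs).differentiableAt.differentiableWithinAt
    · intro s hs
      rw [interior_Icc] at hs
      rw [(hψd s hs).deriv]
      have h1 := stepC s hs
      have h2 := Real.exp_pos (lam * s)
      nlinarith [mul_le_mul_of_nonneg_left h1 h2.le]
  have hgS0 : g S₀ = 0 := by
    have hle : ψ S₀ ≤ ψ 0 := hψanti (left_mem_Icc.mpr hS₀.le) (right_mem_Icc.mpr hS₀.le) hS₀.le
    have h0 : ψ 0 = g 0 := by simp [hψdef]
    have hSnn : 0 ≤ g S₀ := hgnonneg S₀ (right_mem_Icc.mpr hS₀.le)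
    have hexp1 : lam * S₀ + 1 ≤ Real.exp (lam * S₀) := Real.add_one_le_exp _
    have hlS : 0 < lam * S₀ := mul_pos hlam hS₀
    have : Real.exp (lam * S₀) * g S₀ ≤ g S₀ := by
      have hle' : Real.exp (lam * S₀) * g S₀ ≤ g 0 := by simpa [hψdef] using hle
      rw [hgper] at hle'
      exact hle'
    nlinarith [this, hSnn, hexp1, hlS]
  have stepE : ∀ s ∈ Icc (0:ℝ) S₀, g s = 0 := by
    intro s hs
    have hle : ψ s ≤ ψ 0 := hψanti (left_mem_Icc.mpr hS₀.le) hs hs.1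
    have h0 : ψ 0 = g 0 := by simp [hψdef]
    have hg0 : g 0 = 0 := hgper.trans hgS0
    have hnn : 0 ≤ g s := hgnonneg s hs
    have hexp : 0 < Real.exp (lam * s) := Real.exp_pos _
    have : Real.exp (lam * s) * g s ≤ 0 := by
      have hle' : Real.exp (lam * s) * g s ≤ g 0 := by simpa [hψdef] using hle
      rw [hg0] at hle'
      exact hle'
    nlinarith
  -- Step F: conclusion
  intro y hy s hs
  have hgs : g s = 0 := stepE s (Ioo_subset_Icc_self hs)
  have hcont : Continuous (fun z => h z s) := (Ch s (Ioo_subset_Icc_self hs)).continuous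
  have hint : Integrable (fun z => h z s) := hInth s (Ioo_subset_Icc_self hs)
  have hnn : ∀ z : E3, 0 ≤ h z s :=
    fun z => Real.rpow_nonneg (hfpos z s (Ioo_subset_Icc_self hs)) q
  have hae : (fun z => h z s) =ᵐ[volume] 0 :=
    (integral_eq_zero_iff_of_nonneg hnn hint).mp hgs
  have hzero_all : (fun z => h z s) = 0 := by
    exact (Continuous.ae_eq_iff_eq volume hcont continuous_const).mp hae
  have : h y s = 0 := congrFun hzero_all y
  have := (Real.rpow_eq_zero (hfpos y s (Ioo_subset_Icc_self hs)) hqne).mp this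
  exact this
end
end

section
/- Let α > 0, δ ∈ (0,1), and let (V, B, P) be a solution of the self-similar MHD system on ℝ³ × ℝ which is time-periodic with period S₀ > 0, with V of class C¹ in s, V(·,s) of class C¹ in y, and B of class C¹ on ℝ³ × ℝ. Suppose V(0,s) = 0 and D_yV(0,s) = 0 for all s ∈ (0,S₀). Let R > 0, set M = sup over s ∈ (0,S₀) of the δ-Hölder seminorm of D_yV(·,s) on B_R, assume 0 < M < ∞, and set μ = min{ 1/(2(α+1)M), α/(2(α+1)M) } and R₀ = min{ R, μ^{1/δ} }. Then B = 0 on B_{R₀} × (0,S₀). -/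
noncomputable section

open Real Metric Set
open scoped RealInnerProductSpace

set_option maxHeartbeats 1000000 in
/-- First step of the proof of Theorem 1.4 (A): for the self-similar MHD system
with α > 0, the magnetic field vanishes on the ball B_{R₀}. -/
theorem mhd_magnetic_vanishes_first_ball
    (α δ S₀ : ℝ) (hα : 0 < α) (hδ : δ ∈ Set.Ioo (0:ℝ) 1) (hS₀ : 0 < S₀)
    (V B : E3 → ℝ → E3) (P : E3 → ℝ → ℝ)
    (hV_s : ∀ y : E3, ContDiff ℝ 1 (fun s : ℝ => V y s))
    (hV_y : ∀ s : ℝ, ContDiff ℝ 1 (fun y : E3 => V y s))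
    (hB : ContDiff ℝ 1 (fun p : E3 × ℝ => B p.1 p.2))
    (heqV : ∀ (y : E3) (s : ℝ),
      deriv (fun t => V y t) s + (α/(α+1)) • V y s
        + (1/(α+1)) • fderiv ℝ (fun z => V z s) y y
        + fderiv ℝ (fun z => V z s) y (V y s)
      = fderiv ℝ (fun z => B z s) y (B y s)
        - gradient (fun z => P z s + ‖B z s‖ ^ 2 / 2) y)
    (heqB : ∀ (y : E3) (s : ℝ),
      deriv (fun t => B y t) s + (α/(α+1)) • B y s
        + (1/(α+1)) • fderiv ℝ (fun z => B z s) y y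
        + fderiv ℝ (fun z => B z s) y (V y s)
      = fderiv ℝ (fun z => V z s) y (B y s))
    (hdivV : ∀ (y : E3) (s : ℝ), div3 (fun z => V z s) y = 0)
    (hdivB : ∀ (y : E3) (s : ℝ), div3 (fun z => B z s) y = 0)
    (hperV : ∀ (y : E3) (s : ℝ), V y (s + S₀) = V y s)
    (hperB : ∀ (y : E3) (s : ℝ), B y (s + S₀) = B y s)
    (hV0 : ∀ s ∈ Set.Ioo (0:ℝ) S₀, V 0 s = 0)
    (hDV0 : ∀ s ∈ Set.Ioo (0:ℝ) S₀, fderiv ℝ (fun z => V z s) 0 = 0)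
    (R M : ℝ) (hRpos : 0 < R) (hM : 0 < M)
    (hMb : ∀ s ∈ Set.Ioo (0:ℝ) S₀, ∀ y₁ ∈ Metric.ball (0:E3) R, ∀ y₂ ∈ Metric.ball (0:E3) R,
      ‖fderiv ℝ (fun z => V z s) y₁ - fderiv ℝ (fun z => V z s) y₂‖ ≤ M * ‖y₁ - y₂‖ ^ δ)
    (μ R₀ : ℝ)
    (hμ : μ = min (1/(2*(α+1)*M)) (α/(2*(α+1)*M)))
    (hR₀ : R₀ = min R (μ ^ (1/δ))) :
    ∀ y ∈ Metric.ball (0:E3) R₀, ∀ s ∈ Set.Ioo (0:ℝ) S₀, B y s = 0 := by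
  obtain ⟨hδ0, hδ1⟩ := hδ
  have ha : (0:ℝ) < α + 1 := by linarith
  have hane : (α + 1) ≠ 0 := ne_of_gt ha
  have hμpos : 0 < μ := by
    rw [hμ]
    exact lt_min (by positivity) (by positivity)
  have hcpos : 0 < M * μ := mul_pos hM hμpos
  have hc1 : M * μ ≤ 1/(2*(α+1)) := by
    have h1 : μ ≤ 1/(2*(α+1)*M) := hμ ▸ min_le_left _ _
    have h2 : M * μ ≤ M * (1/(2*(α+1)*M)) := mul_le_mul_of_nonneg_left h1 hM.le
    have h3 : M * (1/(2*(α+1)*M)) = 1/(2*(α+1)) := by field_simp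
    linarith
  have hc2 : M * μ ≤ α/(2*(α+1)) := by
    have h1 : μ ≤ α/(2*(α+1)*M) := hμ ▸ min_le_right _ _
    have h2 : M * μ ≤ M * (α/(2*(α+1)*M)) := mul_le_mul_of_nonneg_left h1 hM.le
    have h3 : M * (α/(2*(α+1)*M)) = α/(2*(α+1)) := by field_simp
    linarith
  have hR₀pos : 0 < R₀ := by
    rw [hR₀]; exact lt_min hRpos (Real.rpow_pos_of_pos hμpos _)
  have hR₀R : R₀ ≤ R := hR₀ ▸ min_le_left _ _
  have hmem : ∀ y : E3, y ∈ Metric.ball (0:E3) R₀ ↔ ‖y‖ < R₀ := by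
    intro y; rw [Metric.mem_ball, dist_zero_right]
  have hRδ : ∀ y : E3, ‖y‖ < R₀ → M * ‖y‖ ^ δ ≤ M * μ := by
    intro y hy
    have hle : ‖y‖ ≤ μ ^ (1/δ) := le_trans hy.le (hR₀ ▸ min_le_right _ _)
    have h1 : ‖y‖ ^ δ ≤ (μ ^ (1/δ)) ^ δ := Real.rpow_le_rpow (norm_nonneg _) hle hδ0.le
    have h2 : (μ ^ (1/δ)) ^ δ = μ := by
      rw [← Real.rpow_mul hμpos.le, one_div_mul_cancel (ne_of_gt hδ0), Real.rpow_one]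
    exact mul_le_mul_of_nonneg_left (h2 ▸ h1) hM.le
  have hball : Metric.ball (0:E3) R₀ ⊆ Metric.ball (0:E3) R := Metric.ball_subset_ball hR₀R
  -- fderiv bound on (0, S₀)
  have hA : ∀ s ∈ Set.Ioo (0:ℝ) S₀, ∀ y ∈ Metric.ball (0:E3) R₀,
      ‖fderiv ℝ (fun z => V z s) y‖ ≤ M * μ := by
    intro s hs y hy
    have h0 : (0:E3) ∈ Metric.ball (0:E3) R := by
      rw [Metric.mem_ball, dist_self]; exact hRpos
    have h := hMb s hs y (hball hy) 0 h0
    rw [hDV0 s hs, sub_zero, sub_zero] at h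
    exact h.trans (hRδ y ((hmem y).1 hy))
  -- Lipschitz bound on (0, S₀)
  have hVlip : ∀ s ∈ Set.Ioo (0:ℝ) S₀, ∀ y₁ ∈ Metric.ball (0:E3) R₀,
      ∀ y₂ ∈ Metric.ball (0:E3) R₀, ‖V y₁ s - V y₂ s‖ ≤ (M * μ) * ‖y₁ - y₂‖ := by
    intro s hs y₁ h₁ y₂ h₂
    exact Convex.norm_image_sub_le_of_norm_fderiv_le
      (fun x _ => ((hV_y s).differentiable one_ne_zero) x)
      (fun x hx => hA s hs x hx) (convex_ball _ _) h₂ h₁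
  have hVb : ∀ s ∈ Set.Ioo (0:ℝ) S₀, ∀ y ∈ Metric.ball (0:E3) R₀,
      ‖V y s‖ ≤ (M * μ) * ‖y‖ := by
    intro s hs y hy
    have h0 : (0:E3) ∈ Metric.ball (0:E3) R₀ := by
      rw [Metric.mem_ball, dist_self]; exact hR₀pos
    have h := hVlip s hs y hy 0 h0
    rwa [hV0 s hs, sub_zero, sub_zero] at h
  -- Lipschitz bound at s = 0 by limiting
  have hVlip0 : ∀ y₁ ∈ Metric.ball (0:E3) R₀, ∀ y₂ ∈ Metric.ball (0:E3) R₀,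
      ‖V y₁ 0 - V y₂ 0‖ ≤ (M * μ) * ‖y₁ - y₂‖ := by
    intro y₁ h₁ y₂ h₂
    have hcont : Filter.Tendsto (fun t => ‖V y₁ t - V y₂ t‖) (nhdsWithin 0 (Set.Ioi 0))
        (nhds ‖V y₁ 0 - V y₂ 0‖) := by
      have : Continuous (fun t => ‖V y₁ t - V y₂ t‖) :=
        ((hV_s y₁).continuous.sub (hV_s y₂).continuous).norm
      exact (this.tendsto 0).mono_left nhdsWithin_le_nhds
    refine le_of_tendsto hcont ?_
    filter_upwards [Ioo_mem_nhdsGT_of_mem (⟨le_refl (0:ℝ), hS₀⟩ : (0:ℝ) ∈ Set.Ico 0 S₀)]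
      with t ht
    exact hVlip t ht y₁ h₁ y₂ h₂
  have hVb0 : ∀ y ∈ Metric.ball (0:E3) R₀, ‖V y 0‖ ≤ (M * μ) * ‖y‖ := by
    intro y hy
    have h0 : (0:E3) ∈ Metric.ball (0:E3) R₀ := by
      rw [Metric.mem_ball, dist_self]; exact hR₀pos
    have h := hVlip0 y hy 0 h0
    have hV00 : V 0 0 = 0 := by
      have hcont : Filter.Tendsto (fun t => ‖V 0 t‖) (nhdsWithin 0 (Set.Ioi 0))
          (nhds ‖V (0:E3) 0‖) :=
        ((hV_s 0).continuous.norm.tendsto 0).mono_left nhdsWithin_le_nhds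
      have hle : ‖V (0:E3) 0‖ ≤ 0 := by
        refine le_of_tendsto hcont ?_
        filter_upwards [Ioo_mem_nhdsGT_of_mem (⟨le_refl (0:ℝ), hS₀⟩ : (0:ℝ) ∈ Set.Ico 0 S₀)]
          with t ht
        rw [hV0 t ht]; simp
      simpa using norm_le_zero_iff.1 hle
    rwa [hV00, sub_zero, sub_zero] at h
  have hA0 : ∀ y ∈ Metric.ball (0:E3) R₀, ‖fderiv ℝ (fun z => V z 0) y‖ ≤ M * μ := by
    intro y hy
    have hd : HasFDerivAt (fun z => V z 0) (fderiv ℝ (fun z => V z 0) y) y :=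
      (((hV_y 0).differentiable one_ne_zero) y).hasFDerivAt
    refine hd.le_of_lip' hcpos.le ?_
    filter_upwards [isOpen_ball.mem_nhds hy] with x hx
    exact hVlip0 x hx y hy
  -- periodicity reduction
  have hperV' : ∀ (y : E3) (s : ℝ), V y s = V y (toIcoMod hS₀ 0 s) := by
    intro y s
    have h1 : Function.Periodic (fun t => V y t) S₀ := hperV y
    have h2 := h1.sub_zsmul_eq (x := s) (toIcoDiv hS₀ 0 s)
    rw [self_sub_toIcoDiv_zsmul hS₀ 0 s] at h2
    exact h2.symm
  have hperB' : ∀ (y : E3) (s : ℝ), B y s = B y (toIcoMod hS₀ 0 s) := by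
    intro y s
    have h1 : Function.Periodic (fun t => B y t) S₀ := hperB y
    have h2 := h1.sub_zsmul_eq (x := s) (toIcoDiv hS₀ 0 s)
    rw [self_sub_toIcoDiv_zsmul hS₀ 0 s] at h2
    exact h2.symm
  -- bounds for all s
  have hV_all : ∀ (s : ℝ), ∀ y ∈ Metric.ball (0:E3) R₀,
      ‖V y s‖ ≤ (M * μ) * ‖y‖ ∧ ‖fderiv ℝ (fun z => V z s) y‖ ≤ M * μ := by
    intro s y hy
    have hfun : (fun z => V z s) = (fun z => V z (toIcoMod hS₀ 0 s)) :=
      funext fun z => hperV' z s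
    have hmemIco := toIcoMod_mem_Ico' hS₀ s
    rcases eq_or_lt_of_le hmemIco.1 with h0 | h0
    · rw [hperV' y s, hfun, ← h0]
      exact ⟨hVb0 y hy, hA0 y hy⟩
    · rw [hperV' y s, hfun]
      exact ⟨hVb _ ⟨h0, hmemIco.2⟩ y hy, hA _ ⟨h0, hmemIco.2⟩ y hy⟩
  -- the maximum of F
  set K : Set (E3 × ℝ) := (Metric.closedBall (0:E3) R₀) ×ˢ (Set.Icc (0:ℝ) S₀) with hK
  set F : E3 × ℝ → ℝ :=
    fun p => (⟪B p.1 p.2, B p.1 p.2⟫) * (R₀^2 - ⟪p.1, p.1⟫) with hF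
  have hBcont : Continuous fun p : E3 × ℝ => B p.1 p.2 := hB.continuous
  have hFcont : Continuous F := by
    rw [hF]
    exact (hBcont.inner hBcont).mul
      (continuous_const.sub (continuous_fst.inner continuous_fst))
  have hKcomp : IsCompact K := (isCompact_closedBall _ _).prod isCompact_Icc
  have hKne : K.Nonempty := by
    refine ⟨(0, 0), Set.mem_prod.2 ⟨?_, ?_⟩⟩
    · rw [Metric.mem_closedBall, dist_self]; exact hR₀pos.le
    · exact ⟨le_refl 0, hS₀.le⟩
  obtain ⟨⟨y₁, s₁⟩, hpK, hpmax⟩ := hKcomp.exists_isMaxOn hKne hFcont.continuousOn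
  have hglob : ∀ (z : E3), ‖z‖ ≤ R₀ → ∀ t : ℝ,
      (⟪B z t, B z t⟫) * (R₀^2 - ⟪z, z⟫)
        ≤ (⟪B y₁ s₁, B y₁ s₁⟫) * (R₀^2 - ⟪y₁, y₁⟫) := by
    intro z hz t
    have h2 : ((z, toIcoMod hS₀ 0 t) : E3 × ℝ) ∈ K :=
      Set.mem_prod.2 ⟨by rw [Metric.mem_closedBall, dist_zero_right]; exact hz,
        Set.Ico_subset_Icc_self (toIcoMod_mem_Ico' hS₀ t)⟩
    have h3 := isMaxOn_iff.1 hpmax _ h2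
    rw [hF] at h3
    simp only at h3
    rwa [← hperB' z t] at h3
  -- main claim
  have hclaim : (⟪B y₁ s₁, B y₁ s₁⟫) * (R₀^2 - ⟪y₁, y₁⟫) ≤ 0 := by
    by_contra hF0
    push_neg at hF0
    have hb2 : (0:ℝ) ≤ ⟪B y₁ s₁, B y₁ s₁⟫ := real_inner_self_nonneg
    have hw1 : (0:ℝ) < R₀^2 - ⟪y₁, y₁⟫ := by
      by_contra h
      push_neg at h
      exact absurd hF0 (not_lt.2 (mul_nonpos_of_nonneg_of_nonpos hb2 h))
    have hbpos : (0:ℝ) < ⟪B y₁ s₁, B y₁ s₁⟫ := by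
      rcases hb2.lt_or_eq with h | h
      · exact h
      · rw [← h] at hF0; simp at hF0
    have hy₁ : y₁ ∈ Metric.ball (0:E3) R₀ := by
      rw [hmem]
      nlinarith [real_inner_self_eq_norm_sq y₁, norm_nonneg y₁, hR₀pos]
    have hyle₁ : ‖y₁‖ ≤ R₀ := le_of_lt ((hmem y₁).1 hy₁)
    -- differentiability of B
    have hBz : Differentiable ℝ (fun z : E3 => B z s₁) := by
      have h : Differentiable ℝ ((fun p : E3 × ℝ => B p.1 p.2) ∘ (fun z : E3 => (z, s₁))) :=
        (hB.differentiable one_ne_zero).comp (differentiable_id.prodMk (differentiable_const _))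
      exact h
    have hBt : Differentiable ℝ (fun t : ℝ => B y₁ t) := by
      have h : Differentiable ℝ ((fun p : E3 × ℝ => B p.1 p.2) ∘ (fun t : ℝ => ((y₁ : E3), t))) :=
        (hB.differentiable one_ne_zero).comp ((differentiable_const _).prodMk differentiable_id)
      exact h
    -- time derivative vanishes
    have hBd : HasDerivAt (fun t => B y₁ t) (deriv (fun t => B y₁ t) s₁) s₁ :=
      (hBt s₁).hasDerivAt
    have hg1 : HasDerivAt (fun t => (⟪B y₁ t, B y₁ t⟫) * (R₀^2 - ⟪y₁, y₁⟫))
        ((⟪B y₁ s₁, deriv (fun t => B y₁ t) s₁⟫ + ⟪deriv (fun t => B y₁ t) s₁, B y₁ s₁⟫)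
          * (R₀^2 - ⟪y₁, y₁⟫)) s₁ :=
      (hBd.inner ℝ hBd).mul_const _
    have hmax_t : IsLocalMax (fun t => (⟪B y₁ t, B y₁ t⟫) * (R₀^2 - ⟪y₁, y₁⟫)) s₁ :=
      Filter.Eventually.of_forall (fun t => hglob y₁ hyle₁ t)
    have hd0 : (⟪B y₁ s₁, deriv (fun t => B y₁ t) s₁⟫
        + ⟪deriv (fun t => B y₁ t) s₁, B y₁ s₁⟫) * (R₀^2 - ⟪y₁, y₁⟫) = 0 := by
      have h := hmax_t.deriv_eq_zero
      rwa [hg1.deriv] at h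
    have hbsb : (⟪deriv (fun t => B y₁ t) s₁, B y₁ s₁⟫) = 0 := by
      rcases mul_eq_zero.1 hd0 with h | h
      · have hcomm := real_inner_comm (B y₁ s₁) (deriv (fun t => B y₁ t) s₁)
        linarith
      · exact absurd h (ne_of_gt hw1)
    -- space derivative vanishes
    have hBzd : HasFDerivAt (fun z => B z s₁) (fderiv ℝ (fun z => B z s₁) y₁) y₁ :=
      (hBz y₁).hasFDerivAt
    have hidd : HasFDerivAt (fun y : E3 => y) (ContinuousLinearMap.id ℝ E3) y₁ :=
      hasFDerivAt_id y₁
    have hg2 : HasFDerivAt (fun y : E3 => (⟪B y s₁, B y s₁⟫) * (R₀^2 - ⟪y, y⟫))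
        ((⟪B y₁ s₁, B y₁ s₁⟫) •
            ((0 : E3 →L[ℝ] ℝ) - ((fderivInnerCLM ℝ (y₁, y₁)).comp
              ((ContinuousLinearMap.id ℝ E3).prod (ContinuousLinearMap.id ℝ E3))))
          + (R₀^2 - ⟪y₁, y₁⟫) •
            ((fderivInnerCLM ℝ (B y₁ s₁, B y₁ s₁)).comp
              ((fderiv ℝ (fun z => B z s₁) y₁).prod (fderiv ℝ (fun z => B z s₁) y₁)))) y₁ :=
      (hBzd.inner ℝ hBzd).mul ((hasFDerivAt_const _ _).sub (hidd.inner ℝ hidd))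
    have hmax_y : IsLocalMax (fun y : E3 => (⟪B y s₁, B y s₁⟫) * (R₀^2 - ⟪y, y⟫)) y₁ := by
      refine Filter.eventually_of_mem (isOpen_ball.mem_nhds hy₁) ?_
      intro z hz
      exact hglob z (le_of_lt ((hmem z).1 hz)) s₁
    have hDeq : ((⟪B y₁ s₁, B y₁ s₁⟫) •
            ((0 : E3 →L[ℝ] ℝ) - ((fderivInnerCLM ℝ (y₁, y₁)).comp
              ((ContinuousLinearMap.id ℝ E3).prod (ContinuousLinearMap.id ℝ E3))))
          + (R₀^2 - ⟪y₁, y₁⟫) •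
            ((fderivInnerCLM ℝ (B y₁ s₁, B y₁ s₁)).comp
              ((fderiv ℝ (fun z => B z s₁) y₁).prod (fderiv ℝ (fun z => B z s₁) y₁)))) = 0 := by
      rw [← hg2.fderiv]
      exact hmax_y.fderiv_eq_zero
    have hkey : ∀ u : E3, (R₀^2 - ⟪y₁, y₁⟫) * ⟪fderiv ℝ (fun z => B z s₁) y₁ u, B y₁ s₁⟫
        = (⟪B y₁ s₁, B y₁ s₁⟫) * ⟪y₁, u⟫ := by
      intro u
      have h := DFunLike.congr_fun hDeq u
      simp only [ContinuousLinearMap.add_apply, ContinuousLinearMap.smul_apply,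
        ContinuousLinearMap.sub_apply, ContinuousLinearMap.zero_apply,
        ContinuousLinearMap.comp_apply, ContinuousLinearMap.prod_apply,
        ContinuousLinearMap.id_apply, fderivInnerCLM_apply, smul_eq_mul] at h
      have c1 := real_inner_comm (B y₁ s₁) (fderiv ℝ (fun z => B z s₁) y₁ u)
      have c2 := real_inner_comm u y₁
      nlinarith [h]
    -- the equation, paired with b
    have heq := heqB y₁ s₁
    have hip := congrArg (fun z : E3 => (⟪z, B y₁ s₁⟫)) heq
    simp only [inner_add_left, real_inner_smul_left] at hip
    -- cleaned equation
    have hEa : α * ⟪B y₁ s₁, B y₁ s₁⟫ + ⟪fderiv ℝ (fun z => B z s₁) y₁ y₁, B y₁ s₁⟫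
        + (α+1) * ⟪fderiv ℝ (fun z => B z s₁) y₁ (V y₁ s₁), B y₁ s₁⟫
        = (α+1) * ⟪fderiv ℝ (fun z => V z s₁) y₁ (B y₁ s₁), B y₁ s₁⟫ := by
      rw [hbsb] at hip
      have harith : ∀ q t1 t2 ab : ℝ,
          0 + α/(α+1) * q + 1/(α+1) * t1 + t2 = ab →
          α * q + t1 + (α+1) * t2 = (α+1) * ab := by
        intro q t1 t2 ab h
        field_simp at h
        linarith
      exact harith _ _ _ _ hip
    have e1 := hkey y₁
    have e2 := hkey (V y₁ s₁)
    -- estimates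
    have hAle : ‖fderiv ℝ (fun z => V z s₁) y₁‖ ≤ M * μ := (hV_all s₁ y₁ hy₁).2
    have hvle : ‖V y₁ s₁‖ ≤ (M * μ) * ‖y₁‖ := (hV_all s₁ y₁ hy₁).1
    have hAbb : (⟪fderiv ℝ (fun z => V z s₁) y₁ (B y₁ s₁), B y₁ s₁⟫)
        ≤ (M * μ) * ⟪B y₁ s₁, B y₁ s₁⟫ := by
      have h1 := real_inner_le_norm (fderiv ℝ (fun z => V z s₁) y₁ (B y₁ s₁)) (B y₁ s₁)
      have h2 := (fderiv ℝ (fun z => V z s₁) y₁).le_opNorm (B y₁ s₁)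
      have h3 := real_inner_self_eq_norm_sq (B y₁ s₁)
      nlinarith [norm_nonneg (B y₁ s₁), norm_nonneg (fderiv ℝ (fun z => V z s₁) y₁)]
    have hyv : -((M * μ) * ⟪y₁, y₁⟫) ≤ ⟪y₁, V y₁ s₁⟫ := by
      have h1 := abs_real_inner_le_norm y₁ (V y₁ s₁)
      have h2 := real_inner_self_eq_norm_sq y₁
      have h3 := neg_abs_le (⟪y₁, V y₁ s₁⟫)
      nlinarith [norm_nonneg y₁]
    -- multiply hEa by w and substitute
    have hEw : α * (⟪B y₁ s₁, B y₁ s₁⟫ * (R₀^2 - ⟪y₁, y₁⟫))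
        + ⟪B y₁ s₁, B y₁ s₁⟫ * ⟪y₁, y₁⟫
        + (α+1) * (⟪B y₁ s₁, B y₁ s₁⟫ * ⟪y₁, V y₁ s₁⟫)
        = (α+1) * (⟪fderiv ℝ (fun z => V z s₁) y₁ (B y₁ s₁), B y₁ s₁⟫
            * (R₀^2 - ⟪y₁, y₁⟫)) := by
      linear_combination (R₀^2 - ⟪y₁, y₁⟫) * hEa - e1 - (α+1) * e2
    -- final contradiction
    have hac1 : (α+1) * (M * μ) ≤ 1/2 := by
      have := mul_le_mul_of_nonneg_left hc1 ha.le
      have h3 : (α+1) * (1/(2*(α+1))) = 1/2 := by field_simp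
      linarith
    have hac2 : (α+1) * (M * μ) ≤ α/2 := by
      have := mul_le_mul_of_nonneg_left hc2 ha.le
      have h3 : (α+1) * (α/(2*(α+1))) = α/2 := by field_simp
      linarith
    have hyy : (0:ℝ) ≤ ⟪y₁, y₁⟫ := real_inner_self_nonneg
    have P1 := mul_le_mul_of_nonneg_left hyv hbpos.le
    have P2 := mul_le_mul_of_nonneg_right hAbb hw1.le
    nlinarith [hEw, mul_le_mul_of_nonneg_left P1 ha.le,
      mul_le_mul_of_nonneg_left P2 ha.le,
      mul_le_mul_of_nonneg_right hac1 (mul_nonneg hbpos.le hyy),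
      mul_le_mul_of_nonneg_right hac2 (mul_nonneg hbpos.le hw1.le),
      mul_pos (mul_pos hα hbpos) hw1, mul_nonneg hbpos.le hyy]
  -- conclusion
  intro y hy s _hs
  have hyR : ‖y‖ < R₀ := (hmem y).1 hy
  have hw : (0:ℝ) < R₀^2 - ⟪y, y⟫ := by
    nlinarith [real_inner_self_eq_norm_sq y, norm_nonneg y]
  have h1 : (⟪B y s, B y s⟫) * (R₀^2 - ⟪y, y⟫) ≤ 0 :=
    le_trans (hglob y hyR.le s) hclaim
  have h2 : (0:ℝ) ≤ ⟪B y s, B y s⟫ := real_inner_self_nonneg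
  have h3 : (⟪B y s, B y s⟫) = 0 := by nlinarith
  exact inner_self_eq_zero.1 h3
end
end
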